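/- Let Q₁, Q₂ be nondegenerate quadratic forms on a 4-dimensional vector space over an algebraically closed field, with non-proportional associated projective quadric surfaces in ℙ³. Then the intersection of the two quadric surfaces contains at most 4 projective lines. -/

import Mathlib

open Matrix

namespace Stmt15Aux

variable {K : Type*} [Field K]

def Hmat (K : Type*) [Field K] : Matrix (Fin 4) (Fin 4) K :=
  !![0,0,0,1; 0,0,-1,0; 0,-1,0,0; 1,0,0,0]

lemma Hmat_transpose : (Hmat K)ᵀ = Hmat K := by
  ext i j; fin_cases i <;> fin_cases j <;> rfl

lemma Hmat_mul_self : Hmat K * Hmat K = 1 := by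
  ext i j
  fin_cases i <;> fin_cases j <;>
    simp (config := { decide := true }) [Matrix.mul_apply, Fin.sum_univ_four, Hmat,
      Matrix.one_apply, Matrix.vecHead, Matrix.vecTail]

lemma Hmat_det_ne_zero : (Hmat K).det ≠ 0 := by
  intro h
  have h1 : (Hmat K).det * (Hmat K).det = 1 := by
    rw [← Matrix.det_mul, Hmat_mul_self, Matrix.det_one]
  rw [h, mul_zero] at h1
  exact zero_ne_one h1

lemma dot16 (M : Matrix (Fin 4) (Fin 4) K) (v w : Fin 4 → K) :
    v ⬝ᵥ M.mulVec w =
      v 0 * M 0 0 * w 0 + v 0 * M 0 1 * w 1 + v 0 * M 0 2 * w 2 + v 0 * M 0 3 * w 3 +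
      v 1 * M 1 0 * w 0 + v 1 * M 1 1 * w 1 + v 1 * M 1 2 * w 2 + v 1 * M 1 3 * w 3 +
      v 2 * M 2 0 * w 0 + v 2 * M 2 1 * w 1 + v 2 * M 2 2 * w 2 + v 2 * M 2 3 * w 3 +
      v 3 * M 3 0 * w 0 + v 3 * M 3 1 * w 1 + v 3 * M 3 2 * w 2 + v 3 * M 3 3 * w 3 := by
  simp [dotProduct, Matrix.mulVec, Fin.sum_univ_four]
  ring

lemma quadH (v : Fin 4 → K) : v ⬝ᵥ (Hmat K).mulVec v = 2 * (v 0 * v 3 - v 1 * v 2) := by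
  rw [dot16]
  norm_num [Hmat, Matrix.cons_val_zero, Matrix.cons_val_one, Matrix.cons_val_two,
    Matrix.cons_val_three, Matrix.head_cons, Matrix.vecHead, Matrix.vecTail, Function.comp]
  ring

lemma congr_dot (A R : Matrix (Fin 4) (Fin 4) K) (v : Fin 4 → K) :
    (R *ᵥ v) ⬝ᵥ (A *ᵥ (R *ᵥ v)) = v ⬝ᵥ ((Rᵀ * A * R) *ᵥ v) := by
  rw [dot16, dot16]
  simp [Matrix.mulVec, Matrix.mul_apply, dotProduct, Fin.sum_univ_four, Matrix.transpose_apply]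
  ring

variable {K : Type*} [Field K]

lemma prop_of_cross_eq {u0 u1 v0 v1 : K} (h : u0 * v1 - u1 * v0 = 0)
    (hu : ¬(u0 = 0 ∧ u1 = 0)) (hv : ¬(v0 = 0 ∧ v1 = 0)) :
    ∃ c : K, c ≠ 0 ∧ v0 = c * u0 ∧ v1 = c * u1 := by
  by_cases h0 : u0 = 0
  · have h1 : u1 ≠ 0 := fun h1 => hu ⟨h0, h1⟩
    have hv0 : v0 = 0 := by
      have h' : u1 * v0 = 0 := by linear_combination -h + v1 * h0
      exact (mul_eq_zero.1 h').resolve_left h1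
    have hv1 : v1 ≠ 0 := fun h1 => hv ⟨hv0, h1⟩
    exact ⟨v1 / u1, div_ne_zero hv1 h1, by rw [h0, hv0, mul_zero], by field_simp⟩
  · have hv0 : v0 ≠ 0 := by
      intro hv0'
      have h' : u0 * v1 = 0 := by linear_combination h + u1 * hv0'
      exact hv ⟨hv0', (mul_eq_zero.1 h').resolve_left h0⟩
    refine ⟨v0 / u0, div_ne_zero hv0 h0, by field_simp, ?_⟩
    field_simp
    linear_combination h

lemma vec_ext {x : Fin 4 → K} {p q r s : K} (h0 : x 0 = p) (h1 : x 1 = q)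
    (h2 : x 2 = r) (h3 : x 3 = s) : x = ![p, q, r, s] := by
  funext i
  fin_cases i
  · simpa using h0
  · simpa using h1
  · simpa using h2
  · simpa using h3

def ecol (u0 u1 : K) : Fin 4 → K := ![u0, 0, u1, 0]
def fcol (u0 u1 : K) : Fin 4 → K := ![0, u0, 0, u1]
def erow (u0 u1 : K) : Fin 4 → K := ![u0, u1, 0, 0]
def frow (u0 u1 : K) : Fin 4 → K := ![0, 0, u0, u1]

def Wcol (u0 u1 : K) : Submodule K (Fin 4 → K) := Submodule.span K {ecol u0 u1, fcol u0 u1}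
def Wrow (u0 u1 : K) : Submodule K (Fin 4 → K) := Submodule.span K {erow u0 u1, frow u0 u1}

lemma col_comb (a b u0 u1 : K) :
    a • ecol u0 u1 + b • fcol u0 u1 = ![u0 * a, u0 * b, u1 * a, u1 * b] := by
  funext i
  fin_cases i <;> simp [ecol, fcol] <;> ring

lemma row_comb (a b p q : K) :
    a • erow p q + b • frow p q = ![a * p, a * q, b * p, b * q] := by
  funext i
  fin_cases i <;> simp [erow, frow]

lemma ecol_mem (u0 u1 : K) : ecol u0 u1 ∈ Wcol u0 u1 :=
  Submodule.subset_span (Set.mem_insert _ _)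

lemma fcol_mem (u0 u1 : K) : fcol u0 u1 ∈ Wcol u0 u1 :=
  Submodule.subset_span (Set.mem_insert_of_mem _ rfl)

lemma erow_mem (u0 u1 : K) : erow u0 u1 ∈ Wrow u0 u1 :=
  Submodule.subset_span (Set.mem_insert _ _)

lemma frow_mem (u0 u1 : K) : frow u0 u1 ∈ Wrow u0 u1 :=
  Submodule.subset_span (Set.mem_insert_of_mem _ rfl)

lemma finrank_span_pair_le (x y : Fin 4 → K) :
    Module.finrank K (Submodule.span K {x, y} : Submodule K (Fin 4 → K)) ≤ 2 := by
  classical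
  refine le_trans (finrank_span_le_card _) ?_
  rw [Set.toFinset_insert, Set.toFinset_singleton]
  exact le_trans (Finset.card_insert_le _ _) (by simp)

lemma Wcol_eq_of_prop {u0 u1 v0 v1 c : K} (hc : c ≠ 0) (h0 : v0 = c * u0) (h1 : v1 = c * u1) :
    Wcol v0 v1 = Wcol u0 u1 := by
  have key : ∀ (a b p q e : K), e ≠ 0 → a = e * p → b = e * q → Wcol a b ≤ Wcol p q := by
    intro a b p q e he ha hb
    rw [Wcol, Submodule.span_le]
    rintro z (rfl | rfl)
    · refine Submodule.mem_span_pair.2 ⟨e, 0, ?_⟩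
      rw [col_comb, ha, hb]
      funext i
      fin_cases i <;> simp [ecol] <;> ring
    · refine Submodule.mem_span_pair.2 ⟨0, e, ?_⟩
      rw [col_comb, ha, hb]
      funext i
      fin_cases i <;> simp [fcol] <;> ring
  refine le_antisymm (key _ _ _ _ c hc h0 h1) (key _ _ _ _ c⁻¹ (inv_ne_zero hc) ?_ ?_) <;>
    field_simp [h0, h1] <;> simp only [h0, h1] <;> ring

lemma Wrow_eq_of_prop {u0 u1 v0 v1 c : K} (hc : c ≠ 0) (h0 : v0 = c * u0) (h1 : v1 = c * u1) :
    Wrow v0 v1 = Wrow u0 u1 := by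
  have key : ∀ (a b p q e : K), e ≠ 0 → a = e * p → b = e * q → Wrow a b ≤ Wrow p q := by
    intro a b p q e he ha hb
    rw [Wrow, Submodule.span_le]
    rintro z (rfl | rfl)
    · refine Submodule.mem_span_pair.2 ⟨e, 0, ?_⟩
      rw [row_comb, ha, hb]
      funext i
      fin_cases i <;> simp [erow] <;> ring
    · refine Submodule.mem_span_pair.2 ⟨0, e, ?_⟩
      rw [row_comb, ha, hb]
      funext i
      fin_cases i <;> simp [frow] <;> ring
  refine le_antisymm (key _ _ _ _ c hc h0 h1) (key _ _ _ _ c⁻¹ (inv_ne_zero hc) ?_ ?_) <;>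
    field_simp [h0, h1] <;> simp only [h0, h1] <;> ring

lemma rank1_factor (x : Fin 4 → K) (hx : x ≠ 0) (hq : x 0 * x 3 - x 1 * x 2 = 0) :
    ∃ u0 u1 a0 a1 : K, ¬(u0 = 0 ∧ u1 = 0) ∧ ¬(a0 = 0 ∧ a1 = 0) ∧
      x 0 = u0 * a0 ∧ x 1 = u0 * a1 ∧ x 2 = u1 * a0 ∧ x 3 = u1 * a1 := by
  by_cases h0 : x 0 = 0
  · by_cases h1 : x 1 = 0
    · refine ⟨0, 1, x 2, x 3, by simp, ?_, by simp [h0], by simp [h1], by ring, by ring⟩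
      rintro ⟨h2, h3⟩
      refine hx ?_
      rw [vec_ext h0 h1 h2 h3]
      funext i
      fin_cases i <;> simp
    · have h2 : x 2 = 0 := by
        have h' : x 1 * x 2 = 0 := by linear_combination -hq + x 3 * h0
        exact (mul_eq_zero.1 h').resolve_left h1
      exact ⟨x 1, x 3, 0, 1, fun h => h1 h.1, by simp, by simp [h0], by ring,
        by simp [h2], by ring⟩
  · refine ⟨x 0, x 2, 1, x 1 / x 0, fun h => h0 h.1, fun h => one_ne_zero h.1,
      by ring, by field_simp, by ring, ?_⟩
    field_simp
    linear_combination hq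


lemma classify (h2 : (2:K) ≠ 0) (W : Submodule K (Fin 4 → K))
    (hrk : Module.finrank K W = 2)
    (hiso : ∀ v ∈ W, v ⬝ᵥ (Hmat K).mulVec v = 0) :
    (∃ u0 u1 : K, ¬(u0 = 0 ∧ u1 = 0) ∧ W = Wcol u0 u1) ∨
    (∃ u0 u1 : K, ¬(u0 = 0 ∧ u1 = 0) ∧ W = Wrow u0 u1) := by
  have b := Module.finBasisOfFinrankEq K W hrk
  set x : Fin 4 → K := ((b 0 : W) : Fin 4 → K) with hxdef
  set y : Fin 4 → K := ((b 1 : W) : Fin 4 → K) with hydef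
  have hxW : x ∈ W := (b 0).2
  have hyW : y ∈ W := (b 1).2
  have hx0 : x ≠ 0 := fun h => b.ne_zero 0 (Subtype.ext h)
  have hy0 : y ≠ 0 := fun h => b.ne_zero 1 (Subtype.ext h)
  have qx : x 0 * x 3 - x 1 * x 2 = 0 := by
    have h := hiso x hxW
    rw [quadH] at h
    exact (mul_eq_zero.1 h).resolve_left h2
  have qy : y 0 * y 3 - y 1 * y 2 = 0 := by
    have h := hiso y hyW
    rw [quadH] at h
    exact (mul_eq_zero.1 h).resolve_left h2
  have qxy : x 0 * y 3 + y 0 * x 3 - x 1 * y 2 - y 1 * x 2 = 0 := by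
    have h := hiso (x + y) (add_mem hxW hyW)
    rw [quadH] at h
    have h' := (mul_eq_zero.1 h).resolve_left h2
    simp only [Pi.add_apply] at h'
    linear_combination h' - qx - qy
  obtain ⟨u0, u1, a0, a1, hu, ha, hx0e, hx1e, hx2e, hx3e⟩ := rank1_factor x hx0 qx
  obtain ⟨v0, v1, b0, b1, hv, hb, hy0e, hy1e, hy2e, hy3e⟩ := rank1_factor y hy0 qy
  have hcross : (u0 * v1 - u1 * v0) * (a0 * b1 - a1 * b0) = 0 := by
    rw [hx0e, hx1e, hx2e, hx3e, hy0e, hy1e, hy2e, hy3e] at qxy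
    linear_combination qxy
  have hW2 : W ≤ Submodule.span K {x, y} := by
    conv_lhs => rw [← Submodule.map_subtype_top W]
    rw [← b.span_eq, Submodule.map_span]
    apply Submodule.span_mono
    rintro _ ⟨_, ⟨i, rfl⟩, rfl⟩
    fin_cases i
    · exact Set.mem_insert _ _
    · exact Set.mem_insert_of_mem _ rfl
  rcases mul_eq_zero.1 hcross with hc | hc
  · left
    obtain ⟨c, hc0, hcv0, hcv1⟩ := prop_of_cross_eq hc hu hv
    refine ⟨u0, u1, hu, ?_⟩
    have hxin : x ∈ Wcol u0 u1 := by
      refine Submodule.mem_span_pair.2 ⟨a0, a1, ?_⟩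
      rw [col_comb]
      exact (vec_ext hx0e hx1e hx2e hx3e).symm
    have hyin : y ∈ Wcol u0 u1 := by
      refine Submodule.mem_span_pair.2 ⟨c * b0, c * b1, ?_⟩
      rw [col_comb, vec_ext hy0e hy1e hy2e hy3e]
      funext i
      fin_cases i <;> simp [hcv0, hcv1] <;> ring
    have hle : Submodule.span K {x, y} ≤ Wcol u0 u1 :=
      Submodule.span_le.2 (Set.insert_subset_iff.mpr ⟨hxin, Set.singleton_subset_iff.mpr hyin⟩)
    exact Submodule.eq_of_le_of_finrank_le (hW2.trans hle)
      (by rw [hrk]; exact finrank_span_pair_le _ _)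
  · right
    obtain ⟨c, hc0, hcb0, hcb1⟩ := prop_of_cross_eq hc ha hb
    refine ⟨a0, a1, ha, ?_⟩
    have hxin : x ∈ Wrow a0 a1 := by
      refine Submodule.mem_span_pair.2 ⟨u0, u1, ?_⟩
      rw [row_comb]
      exact (vec_ext hx0e hx1e hx2e hx3e).symm
    have hyin : y ∈ Wrow a0 a1 := by
      refine Submodule.mem_span_pair.2 ⟨v0 * c, v1 * c, ?_⟩
      rw [row_comb, vec_ext hy0e hy1e hy2e hy3e]
      funext i
      fin_cases i <;> simp [hcb0, hcb1] <;> ring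
    have hle : Submodule.span K {x, y} ≤ Wrow a0 a1 :=
      Submodule.span_le.2 (Set.insert_subset_iff.mpr ⟨hxin, Set.singleton_subset_iff.mpr hyin⟩)
    exact Submodule.eq_of_le_of_finrank_le (hW2.trans hle)
      (by rw [hrk]; exact finrank_span_pair_le _ _)


lemma colvan (N : Matrix (Fin 4) (Fin 4) K) (u0 u1 : K)
    (hval : ∀ v ∈ Wcol u0 u1, v ⬝ᵥ N.mulVec v = 0) :
    N 0 0 * u0 ^ 2 + (N 0 2 + N 2 0) * (u0 * u1) + N 2 2 * u1 ^ 2 = 0 ∧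
    N 1 1 * u0 ^ 2 + (N 1 3 + N 3 1) * (u0 * u1) + N 3 3 * u1 ^ 2 = 0 ∧
    (N 0 1 + N 1 0) * u0 ^ 2 + (N 0 3 + N 3 0 + N 1 2 + N 2 1) * (u0 * u1) +
      (N 2 3 + N 3 2) * u1 ^ 2 = 0 := by
  have he := hval _ (ecol_mem u0 u1)
  have hf := hval _ (fcol_mem u0 u1)
  have hef := hval _ (add_mem (ecol_mem u0 u1) (fcol_mem u0 u1))
  rw [dot16] at he hf hef
  simp [ecol, fcol, Matrix.cons_val_succ] at he hf hef
  exact ⟨by linear_combination he, by linear_combination hf,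
    by linear_combination hef - he - hf⟩

lemma rowvan (N : Matrix (Fin 4) (Fin 4) K) (u0 u1 : K)
    (hval : ∀ v ∈ Wrow u0 u1, v ⬝ᵥ N.mulVec v = 0) :
    N 0 0 * u0 ^ 2 + (N 0 1 + N 1 0) * (u0 * u1) + N 1 1 * u1 ^ 2 = 0 ∧
    N 2 2 * u0 ^ 2 + (N 2 3 + N 3 2) * (u0 * u1) + N 3 3 * u1 ^ 2 = 0 ∧
    (N 0 2 + N 2 0) * u0 ^ 2 + (N 0 3 + N 3 0 + N 1 2 + N 2 1) * (u0 * u1) +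
      (N 1 3 + N 3 1) * u1 ^ 2 = 0 := by
  have he := hval _ (erow_mem u0 u1)
  have hf := hval _ (frow_mem u0 u1)
  have hef := hval _ (add_mem (erow_mem u0 u1) (frow_mem u0 u1))
  rw [dot16] at he hf hef
  simp [erow, frow, Matrix.cons_val_succ] at he hf hef
  exact ⟨by linear_combination he, by linear_combination hf,
    by linear_combination hef - he - hf⟩

lemma nine_to_prop (h2 : (2:K) ≠ 0) (N : Matrix (Fin 4) (Fin 4) K)
    (hsym : ∀ i j, N i j = N j i)
    (e1 : N 0 0 = 0) (e2 : N 0 2 + N 2 0 = 0) (e3 : N 2 2 = 0)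
    (e4 : N 1 1 = 0) (e5 : N 1 3 + N 3 1 = 0) (e6 : N 3 3 = 0)
    (e7 : N 0 1 + N 1 0 = 0) (e8 : N 0 3 + N 3 0 + N 1 2 + N 2 1 = 0)
    (e9 : N 2 3 + N 3 2 = 0) :
    N = (N 0 3) • Hmat K := by
  have half : ∀ a : K, 2 * a = 0 → a = 0 := fun a h => (mul_eq_zero.1 h).resolve_left h2
  have hN01 : N 0 1 = 0 := half _ (by linear_combination e7 - hsym 1 0)
  have hN02 : N 0 2 = 0 := half _ (by linear_combination e2 - hsym 2 0)
  have hN13 : N 1 3 = 0 := half _ (by linear_combination e5 - hsym 3 1)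
  have hN23 : N 2 3 = 0 := half _ (by linear_combination e9 - hsym 3 2)
  have h12 : N 0 3 + N 1 2 = 0 := half _ (by linear_combination e8 - hsym 3 0 - hsym 2 1)
  have hN12 : N 1 2 = -(N 0 3) := by linear_combination h12
  have hN10 : N 1 0 = 0 := (hsym 1 0).trans hN01
  have hN20 : N 2 0 = 0 := (hsym 2 0).trans hN02
  have hN31 : N 3 1 = 0 := (hsym 3 1).trans hN13
  have hN32 : N 3 2 = 0 := (hsym 3 2).trans hN23
  have hN30 : N 3 0 = N 0 3 := hsym 3 0
  have hN21 : N 2 1 = -(N 0 3) := (hsym 2 1).trans hN12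
  ext i j
  fin_cases i <;> fin_cases j <;>
    simp (config := { decide := true }) [Hmat, Matrix.vecHead, Matrix.vecTail] <;>
    first
      | rfl
      | exact e1 | exact e3 | exact e4 | exact e6
      | exact hN01 | exact hN02 | exact hN13 | exact hN23
      | exact hN10 | exact hN20 | exact hN31 | exact hN32
      | exact hN12 | exact hN21 | exact hN30
      | linear_combination hN12 | linear_combination hN21 | linear_combination hN30


lemma three_roots {α β γ u0 u1 v0 v1 w0 w1 : K}
    (huv : u0 * v1 - u1 * v0 ≠ 0) (huw : u0 * w1 - u1 * w0 ≠ 0)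
    (hvw : v0 * w1 - v1 * w0 ≠ 0)
    (h1 : α * u0 ^ 2 + β * (u0 * u1) + γ * u1 ^ 2 = 0)
    (h2 : α * v0 ^ 2 + β * (v0 * v1) + γ * v1 ^ 2 = 0)
    (h3 : α * w0 ^ 2 + β * (w0 * w1) + γ * w1 ^ 2 = 0) :
    α = 0 ∧ β = 0 ∧ γ = 0 := by
  set T : Matrix (Fin 3) (Fin 3) K :=
    !![u0^2, u0*u1, u1^2; v0^2, v0*v1, v1^2; w0^2, w0*w1, w1^2] with hTdef
  have hT : T.det = (u0*v1 - u1*v0) * (u0*w1 - u1*w0) * (v0*w1 - v1*w0) := by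
    rw [hTdef, Matrix.det_fin_three]; simp; ring
  have hdet : T.det ≠ 0 := by rw [hT]; exact mul_ne_zero (mul_ne_zero huv huw) hvw
  have hmv : T *ᵥ ![α, β, γ] = 0 := by
    funext i
    fin_cases i
    · simp [hTdef, Matrix.mulVec, dotProduct, Fin.sum_univ_three]; linear_combination h1
    · simp [hTdef, Matrix.mulVec, dotProduct, Fin.sum_univ_three]; linear_combination h2
    · simp [hTdef, Matrix.mulVec, dotProduct, Fin.sum_univ_three]; linear_combination h3
  have hzero : ![α, β, γ] = 0 := by
    have h1' : T⁻¹ *ᵥ (T *ᵥ ![α, β, γ]) = 0 := by rw [hmv, Matrix.mulVec_zero]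
    rwa [Matrix.mulVec_mulVec, Matrix.nonsing_inv_mul T (isUnit_iff_ne_zero.2 hdet),
      Matrix.one_mulVec] at h1'
  exact ⟨by simpa using congrFun hzero 0, by simpa using congrFun hzero 1,
    by simpa using congrFun hzero 2⟩

lemma pair_of_no_three {αT : Type*} [Nonempty αT] (S : Set αT)
    (h : ∀ a ∈ S, ∀ b ∈ S, ∀ c ∈ S, a = b ∨ a = c ∨ b = c) :
    ∃ x y, S ⊆ {x, y} := by
  classical
  rcases S.eq_empty_or_nonempty with rfl | ⟨a, ha⟩
  · exact ⟨Classical.arbitrary _, Classical.arbitrary _, by simp⟩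
  by_cases hb : ∃ b ∈ S, b ≠ a
  · obtain ⟨b, hbS, hba⟩ := hb
    refine ⟨a, b, fun c hc => ?_⟩
    rcases h a ha b hbS c hc with h' | h' | h'
    · exact absurd h'.symm hba
    · exact Set.mem_insert_iff.2 (Or.inl h'.symm)
    · exact Set.mem_insert_iff.2 (Or.inr h'.symm)
  · push_neg at hb
    exact ⟨a, a, fun c hc => Set.mem_insert_iff.2 (Or.inl (hb c hc))⟩

lemma key (h2 : (2:K) ≠ 0) (N : Matrix (Fin 4) (Fin 4) K) (hsN : Nᵀ = N)
    (hprop : ∀ c : K, N ≠ c • Hmat K) :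
    ∃ a b c d : Submodule K (Fin 4 → K),
      {W : Submodule K (Fin 4 → K) | Module.finrank K W = 2 ∧
        ∀ v ∈ W, v ⬝ᵥ (Hmat K).mulVec v = 0 ∧ v ⬝ᵥ N.mulVec v = 0} ⊆ ({a, b, c, d} :
          Set (Submodule K (Fin 4 → K))) := by
  classical
  have hsym : ∀ i j, N i j = N j i := fun i j => congrFun (congrFun hsN j) i
  set S : Set (Submodule K (Fin 4 → K)) :=
    {W : Submodule K (Fin 4 → K) | Module.finrank K W = 2 ∧
        ∀ v ∈ W, v ⬝ᵥ (Hmat K).mulVec v = 0 ∧ v ⬝ᵥ N.mulVec v = 0} with hSdef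
  -- no three distinct members in the column family
  have no3c : ∀ a ∈ {W ∈ S | ∃ u0 u1 : K, ¬(u0 = 0 ∧ u1 = 0) ∧ W = Wcol u0 u1},
      ∀ b ∈ {W ∈ S | ∃ u0 u1 : K, ¬(u0 = 0 ∧ u1 = 0) ∧ W = Wcol u0 u1},
      ∀ c ∈ {W ∈ S | ∃ u0 u1 : K, ¬(u0 = 0 ∧ u1 = 0) ∧ W = Wcol u0 u1},
      a = b ∨ a = c ∨ b = c := by
    rintro W₁ ⟨hW₁S, u0, u1, hu, rfl⟩ W₂ ⟨hW₂S, v0, v1, hv, rfl⟩ W₃ ⟨hW₃S, w0, w1, hw, rfl⟩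
    by_contra hne
    push_neg at hne
    obtain ⟨h12, h13, h23⟩ := hne
    have c12 : u0 * v1 - u1 * v0 ≠ 0 := fun h => by
      obtain ⟨c, hc0, hc1, hc2⟩ := prop_of_cross_eq h hu hv
      exact h12 (Wcol_eq_of_prop hc0 hc1 hc2).symm
    have c13 : u0 * w1 - u1 * w0 ≠ 0 := fun h => by
      obtain ⟨c, hc0, hc1, hc2⟩ := prop_of_cross_eq h hu hw
      exact h13 (Wcol_eq_of_prop hc0 hc1 hc2).symm
    have c23 : v0 * w1 - v1 * w0 ≠ 0 := fun h => by
      obtain ⟨c, hc0, hc1, hc2⟩ := prop_of_cross_eq h hv hw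
      exact h23 (Wcol_eq_of_prop hc0 hc1 hc2).symm
    obtain ⟨t11, t12, t13⟩ := colvan N u0 u1 (fun v hv => (hW₁S.2 v hv).2)
    obtain ⟨t21, t22, t23⟩ := colvan N v0 v1 (fun v hv => (hW₂S.2 v hv).2)
    obtain ⟨t31, t32, t33⟩ := colvan N w0 w1 (fun v hv => (hW₃S.2 v hv).2)
    obtain ⟨e1, e2, e3⟩ := three_roots c12 c13 c23 t11 t21 t31
    obtain ⟨e4, e5, e6⟩ := three_roots c12 c13 c23 t12 t22 t32
    obtain ⟨e7, e8, e9⟩ := three_roots c12 c13 c23 t13 t23 t33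
    exact hprop _ (nine_to_prop h2 N hsym e1 e2 e3 e4 e5 e6 e7 e8 e9)
  have no3r : ∀ a ∈ {W ∈ S | ∃ u0 u1 : K, ¬(u0 = 0 ∧ u1 = 0) ∧ W = Wrow u0 u1},
      ∀ b ∈ {W ∈ S | ∃ u0 u1 : K, ¬(u0 = 0 ∧ u1 = 0) ∧ W = Wrow u0 u1},
      ∀ c ∈ {W ∈ S | ∃ u0 u1 : K, ¬(u0 = 0 ∧ u1 = 0) ∧ W = Wrow u0 u1},
      a = b ∨ a = c ∨ b = c := by
    rintro W₁ ⟨hW₁S, u0, u1, hu, rfl⟩ W₂ ⟨hW₂S, v0, v1, hv, rfl⟩ W₃ ⟨hW₃S, w0, w1, hw, rfl⟩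
    by_contra hne
    push_neg at hne
    obtain ⟨h12, h13, h23⟩ := hne
    have c12 : u0 * v1 - u1 * v0 ≠ 0 := fun h => by
      obtain ⟨c, hc0, hc1, hc2⟩ := prop_of_cross_eq h hu hv
      exact h12 (Wrow_eq_of_prop hc0 hc1 hc2).symm
    have c13 : u0 * w1 - u1 * w0 ≠ 0 := fun h => by
      obtain ⟨c, hc0, hc1, hc2⟩ := prop_of_cross_eq h hu hw
      exact h13 (Wrow_eq_of_prop hc0 hc1 hc2).symm
    have c23 : v0 * w1 - v1 * w0 ≠ 0 := fun h => by
      obtain ⟨c, hc0, hc1, hc2⟩ := prop_of_cross_eq h hv hw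
      exact h23 (Wrow_eq_of_prop hc0 hc1 hc2).symm
    obtain ⟨t11, t12, t13⟩ := rowvan N u0 u1 (fun v hv => (hW₁S.2 v hv).2)
    obtain ⟨t21, t22, t23⟩ := rowvan N v0 v1 (fun v hv => (hW₂S.2 v hv).2)
    obtain ⟨t31, t32, t33⟩ := rowvan N w0 w1 (fun v hv => (hW₃S.2 v hv).2)
    obtain ⟨e1, e7, e4⟩ := three_roots c12 c13 c23 t11 t21 t31
    obtain ⟨e3, e9, e6⟩ := three_roots c12 c13 c23 t12 t22 t32
    obtain ⟨e2, e8, e5⟩ := three_roots c12 c13 c23 t13 t23 t33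
    exact hprop _ (nine_to_prop h2 N hsym e1 e2 e3 e4 e5 e6 e7 e8 e9)
  obtain ⟨a, b, hab⟩ := pair_of_no_three _ no3c
  obtain ⟨c, d, hcd⟩ := pair_of_no_three _ no3r
  refine ⟨a, b, c, d, fun W hW => ?_⟩
  rcases classify h2 W hW.1 (fun v hv => (hW.2 v hv).1) with ⟨u0, u1, hu, rfl⟩ | ⟨u0, u1, hu, rfl⟩
  · have hmem := hab ⟨hW, u0, u1, hu, rfl⟩
    rcases hmem with rfl | rfl
    · exact Set.mem_insert _ _
    · exact Set.mem_insert_of_mem _ (Set.mem_insert _ _)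
  · have hmem := hcd ⟨hW, u0, u1, hu, rfl⟩
    rcases hmem with rfl | rfl
    · exact Set.mem_insert_of_mem _ (Set.mem_insert_of_mem _ (Set.mem_insert _ _))
    · exact Set.mem_insert_of_mem _ (Set.mem_insert_of_mem _ (Set.mem_insert_of_mem _ rfl))


lemma cong_one [IsAlgClosed K] (h2 : (2:K) ≠ 0) (M : Matrix (Fin 4) (Fin 4) K)
    (hs : Mᵀ = M) (hd : M.det ≠ 0) :
    ∃ P : Matrix (Fin 4) (Fin 4) K, P.det ≠ 0 ∧ Pᵀ * M * P = 1 := by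
  classical
  haveI : Invertible (2:K) := invertibleOfNonzero h2
  have hsym : ∀ i j, M i j = M j i := fun i j => congrFun (congrFun hs j) i
  set B : LinearMap.BilinForm K (Fin 4 → K) := Matrix.toLinearMap₂' K M with hBdef
  have hBapp : ∀ x y, B x y = x ⬝ᵥ M *ᵥ y := fun x y => Matrix.toLinearMap₂'_apply' M x y
  have hBsymm : LinearMap.IsSymm B := by
    refine ⟨fun x y => ?_⟩
    rw [RingHom.id_apply, hBapp, hBapp, dot16, dot16]
    linear_combination (x 0 * y 1 - x 1 * y 0) * hsym 0 1 + (x 0 * y 2 - x 2 * y 0) * hsym 0 2 +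
      (x 0 * y 3 - x 3 * y 0) * hsym 0 3 + (x 1 * y 2 - x 2 * y 1) * hsym 1 2 +
      (x 1 * y 3 - x 3 * y 1) * hsym 1 3 + (x 2 * y 3 - x 3 * y 2) * hsym 2 3
  obtain ⟨v, hv⟩ := LinearMap.BilinForm.exists_orthogonal_basis hBsymm
  have h4 : Module.finrank K (Fin 4 → K) = 4 := by simp
  let v' : Module.Basis (Fin 4) K (Fin 4 → K) := v.reindex (finCongr h4)
  have hv' : ∀ i j : Fin 4, i ≠ j → v' i ⬝ᵥ M *ᵥ v' j = 0 := by
    intro i j hij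
    have hne : (finCongr h4).symm i ≠ (finCongr h4).symm j := fun h => hij (by
      simpa using congrArg (finCongr h4) h)
    have h0 := hv hne
    rw [← hBapp]
    simpa [v', Module.Basis.reindex_apply, LinearMap.IsOrtho, Function.onFun] using h0
  set P : Matrix (Fin 4) (Fin 4) K := (Pi.basisFun K (Fin 4)).toMatrix v' with hPdef
  have hPdet : P.det ≠ 0 := by
    have := (Pi.basisFun K (Fin 4)).isUnit_det v'
    rw [Module.Basis.det_apply] at this
    exact isUnit_iff_ne_zero.1 this
  have hPentry : ∀ i j, P i j = v' j i := by
    intro i j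
    simp [hPdef, Module.Basis.toMatrix_apply, Pi.basisFun_repr]
  have hdot : ∀ i j, (Pᵀ * M * P) i j = v' i ⬝ᵥ M *ᵥ v' j := by
    intro i j
    rw [dot16]
    simp [Matrix.mul_apply, Fin.sum_univ_four, hPentry, Matrix.transpose_apply]
    ring
  set dg : Fin 4 → K := fun i => v' i ⬝ᵥ M *ᵥ v' i with hdgdef
  have hdiag : Pᵀ * M * P = Matrix.diagonal dg := by
    ext i j
    by_cases hij : i = j
    · subst hij
      rw [hdot]
      simp [Matrix.diagonal, hdgdef]
    · rw [hdot, hv' i j hij]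
      simp [Matrix.diagonal, hij]
  have hdg : ∀ i, dg i ≠ 0 := by
    have hdet1 : (Matrix.diagonal dg).det ≠ 0 := by
      rw [← hdiag, Matrix.det_mul, Matrix.det_mul, Matrix.det_transpose]
      exact mul_ne_zero (mul_ne_zero hPdet hd) hPdet
    rw [Matrix.det_diagonal] at hdet1
    intro i hi
    exact hdet1 (Finset.prod_eq_zero (Finset.mem_univ i) hi)
  choose t ht using fun i => IsAlgClosed.exists_pow_nat_eq ((dg i)⁻¹) (n := 2) (by norm_num)
  have ht0 : ∀ i, t i ≠ 0 := by
    intro i h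
    have h1 := ht i
    rw [h] at h1
    simp only [ne_eq, OfNat.ofNat_ne_zero, not_false_eq_true, zero_pow] at h1
    exact hdg i (inv_eq_zero.1 h1.symm)
  refine ⟨P * Matrix.diagonal t, ?_, ?_⟩
  · rw [Matrix.det_mul, Matrix.det_diagonal]
    exact mul_ne_zero hPdet (Finset.prod_ne_zero_iff.2 fun i _ => ht0 i)
  · rw [Matrix.transpose_mul, Matrix.diagonal_transpose]
    have hassoc : Matrix.diagonal t * Pᵀ * M * (P * Matrix.diagonal t) =
        Matrix.diagonal t * (Pᵀ * M * P) * Matrix.diagonal t := by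
      simp [Matrix.mul_assoc]
    rw [hassoc, hdiag, Matrix.diagonal_mul_diagonal, Matrix.diagonal_mul_diagonal]
    rw [show (1 : Matrix (Fin 4) (Fin 4) K) = Matrix.diagonal (fun _ => 1) by
      rw [Matrix.diagonal_one]]
    have hfun : (fun i => t i * dg i * t i) = fun _ : Fin 4 => (1:K) := by
      funext i
      have h2' : t i * dg i * t i = t i ^ 2 * dg i := by ring
      rw [h2', ht i, inv_mul_cancel₀ (hdg i)]
    rw [hfun]


end Stmt15Aux

open Stmt15Aux in
/-- Let `Q₁(v) = v ⬝ᵥ M₁ v` and `Q₂(v) = v ⬝ᵥ M₂ v` be nondegenerate quadratic forms on a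
4-dimensional vector space over an algebraically closed field of characteristic ≠ 2, with
non-proportional associated quadric surfaces in `ℙ³`.  Then the intersection of the two
quadrics contains at most 4 projective lines, i.e. the set of 2-dimensional subspaces on
which both forms vanish identically has at most 4 elements. -/
theorem stmt15 {K : Type*} [Field K] [IsAlgClosed K] (h2 : (2 : K) ≠ 0)
    (M₁ M₂ : Matrix (Fin 4) (Fin 4) K)
    (hs₁ : M₁ᵀ = M₁) (hs₂ : M₂ᵀ = M₂)
    (hd₁ : M₁.det ≠ 0) (hd₂ : M₂.det ≠ 0)
    (hprop : ¬ ∃ c : K, M₂ = c • M₁) :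
    {W : Submodule K (Fin 4 → K) | Module.finrank K W = 2 ∧
      ∀ v ∈ W, v ⬝ᵥ M₁.mulVec v = 0 ∧ v ⬝ᵥ M₂.mulVec v = 0}.ncard ≤ 4 := by
  classical
  obtain ⟨P₁, hP₁d, hP₁⟩ := cong_one h2 M₁ hs₁ hd₁
  obtain ⟨Q, hQd, hQ⟩ := cong_one h2 (Hmat K) Hmat_transpose Hmat_det_ne_zero
  have hP₁u : IsUnit P₁.det := isUnit_iff_ne_zero.2 hP₁d
  set R : Matrix (Fin 4) (Fin 4) K := Q * P₁⁻¹ with hRdef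
  have hRd : R.det ≠ 0 := by
    rw [hRdef, Matrix.det_mul, Matrix.det_nonsing_inv]
    exact mul_ne_zero hQd (by simpa using inv_ne_zero hP₁d)
  have hRu : IsUnit R.det := isUnit_iff_ne_zero.2 hRd
  have hM1 : M₁ = Rᵀ * Hmat K * R := by
    have e1 : (P₁⁻¹)ᵀ * P₁ᵀ = 1 := by
      rw [← Matrix.transpose_mul, Matrix.mul_nonsing_inv _ hP₁u, Matrix.transpose_one]
    have e2 : P₁ * P₁⁻¹ = 1 := Matrix.mul_nonsing_inv _ hP₁u
    have key1 : (P₁⁻¹)ᵀ * (P₁ᵀ * M₁ * P₁) * P₁⁻¹ = M₁ := by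
      rw [show (P₁⁻¹)ᵀ * (P₁ᵀ * M₁ * P₁) * P₁⁻¹ =
        ((P₁⁻¹)ᵀ * P₁ᵀ) * M₁ * (P₁ * P₁⁻¹) by simp [Matrix.mul_assoc], e1, e2,
        Matrix.one_mul, Matrix.mul_one]
    rw [← key1, hP₁, ← hQ, hRdef]
    simp [Matrix.transpose_mul, Matrix.mul_assoc]
  set N : Matrix (Fin 4) (Fin 4) K := (R⁻¹)ᵀ * M₂ * R⁻¹ with hNdef
  have hRR : R⁻¹ * R = 1 := Matrix.nonsing_inv_mul _ hRu
  have hRR' : R * R⁻¹ = 1 := Matrix.mul_nonsing_inv _ hRu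
  have hsN : Nᵀ = N := by
    rw [hNdef]
    rw [Matrix.transpose_mul, Matrix.transpose_mul, Matrix.transpose_transpose, hs₂]
    rw [Matrix.mul_assoc]
  have hM2 : M₂ = Rᵀ * N * R := by
    have e3 : Rᵀ * (R⁻¹)ᵀ = 1 := by
      rw [← Matrix.transpose_mul, hRR, Matrix.transpose_one]
    rw [hNdef, show Rᵀ * ((R⁻¹)ᵀ * M₂ * R⁻¹) * R =
      (Rᵀ * (R⁻¹)ᵀ) * M₂ * (R⁻¹ * R) by simp [Matrix.mul_assoc], e3, hRR,
      Matrix.one_mul, Matrix.mul_one]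
  have hpropN : ∀ c : K, N ≠ c • Hmat K := by
    intro c hc
    refine hprop ⟨c, ?_⟩
    rw [hM2, hc, Matrix.mul_smul, Matrix.smul_mul, hM1]
  obtain ⟨a, b, c, d, hsub⟩ := key h2 N hsN hpropN
  haveI hRinv : Invertible R := R.invertibleOfIsUnitDet hRu
  set e : (Fin 4 → K) ≃ₗ[K] (Fin 4 → K) := R.toLinearEquiv' hRinv with hedef
  have heapp : ∀ w : Fin 4 → K, e w = R *ᵥ w := by
    intro w
    rfl
  set S₁ : Set (Submodule K (Fin 4 → K)) :=
    {W : Submodule K (Fin 4 → K) | Module.finrank K W = 2 ∧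
      ∀ v ∈ W, v ⬝ᵥ M₁.mulVec v = 0 ∧ v ⬝ᵥ M₂.mulVec v = 0} with hS₁def
  have himg : (fun W : Submodule K (Fin 4 → K) =>
      Submodule.map (e : (Fin 4 → K) →ₗ[K] (Fin 4 → K)) W) '' S₁ ⊆ {a, b, c, d} := by
    rintro _ ⟨W, hW, rfl⟩
    apply hsub
    constructor
    · rw [LinearEquiv.finrank_map_eq]
      exact hW.1
    · rintro v hv
      rw [Submodule.mem_map] at hv
      obtain ⟨w, hwW, rfl⟩ := hv
      have hw1 := (hW.2 w hwW).1
      have hw2 := (hW.2 w hwW).2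
      constructor
      · show (e w) ⬝ᵥ (Hmat K) *ᵥ (e w) = 0
        rw [heapp, congr_dot, ← hM1]
        exact hw1
      · show (e w) ⬝ᵥ N *ᵥ (e w) = 0
        rw [heapp, congr_dot, ← hM2]
        exact hw2
  have hinj : Function.Injective (fun W : Submodule K (Fin 4 → K) =>
      Submodule.map (e : (Fin 4 → K) →ₗ[K] (Fin 4 → K)) W) :=
    Submodule.map_injective_of_injective e.injective
  calc S₁.ncard
      = ((fun W : Submodule K (Fin 4 → K) =>
          Submodule.map (e : (Fin 4 → K) →ₗ[K] (Fin 4 → K)) W) '' S₁).ncard :=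
        (Set.ncard_image_of_injective S₁ hinj).symm
    _ ≤ ({a, b, c, d} : Set (Submodule K (Fin 4 → K))).ncard :=
        Set.ncard_le_ncard himg (Set.toFinite _)
    _ ≤ 4 := by
        have i1 := Set.ncard_insert_le a ({b, c, d} : Set (Submodule K (Fin 4 → K)))
        have i2 := Set.ncard_insert_le b ({c, d} : Set (Submodule K (Fin 4 → K)))
        have i3 := Set.ncard_insert_le c ({d} : Set (Submodule K (Fin 4 → K)))
        have i4 : ({d} : Set (Submodule K (Fin 4 → K))).ncard = 1 := Set.ncard_singleton d
        omega
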